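/- Let p and q be distinct primes and let G be a finite group of order p^s·q^t with s, t > 0. Suppose K is a normal Sylow q-subgroup of G that is also a minimal normal subgroup of G, and suppose some Sylow p-subgroup of G is not normal in G. Then K acts regularly on the set Syl_p(G) of Sylow p-subgroups of G by conjugation: for any two Sylow p-subgroups P and Q of G there is a unique k ∈ K with kPk⁻¹ = Q. -/

import Mathlib

/-- Let `G` be a finite group of order `p^s·q^t` (`p ≠ q` primes, `s, t > 0`), let `K`
be a normal Sylow `q`-subgroup of `G` that is a minimal normal subgroup, and suppose
some Sylow `p`-subgroup of `G` is not normal.  Then `K` acts regularly on `Syl_p(G)`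
by conjugation: for any Sylow `p`-subgroups `P, Q` there is a unique `k ∈ K` with
`kPk⁻¹ = Q`. -/
theorem regular_action_of_minimal_normal_sylow (p q s t : ℕ)
    (hp : p.Prime) (hq : q.Prime) (hpq : p ≠ q) (hs : 0 < s) (ht : 0 < t)
    (G : Type*) [Group G] [Finite G] (hcard : Nat.card G = p ^ s * q ^ t)
    (K : Subgroup G) (hKnormal : K.Normal) (hKcard : Nat.card K = q ^ t)
    (hKmin : ∀ N : Subgroup G, N.Normal → N ≤ K → N ≠ ⊥ → N = K)
    (hP : ∃ P : Sylow p G, ¬ (P : Subgroup G).Normal) :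
    ∀ P Q : Sylow p G, ∃! k : K, (k : G) • P = Q := by
  haveI : Fact p.Prime := ⟨hp⟩
  -- K is nontrivial
  haveI hKnt : Nontrivial K := by
    rw [← Finite.one_lt_card_iff_nontrivial, hKcard]
    exact Nat.one_lt_pow ht.ne' hq.one_lt
  -- K is a q-group, so it has nontrivial center; minimality forces K abelian
  haveI : Fact q.Prime := ⟨hq⟩
  have hKq : IsPGroup q K := IsPGroup.of_card hKcard
  haveI hZnt : Nontrivial (Subgroup.center K) := hKq.center_nontrivial
  have hZmap : (Subgroup.center K).map K.subtype = K := by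
    refine hKmin _ inferInstance
      (Subgroup.map_subtype_le _) ?_
    intro hbot
    have hc : Subgroup.center K = ⊥ :=
      (Subgroup.map_eq_bot_iff_of_injective (Subgroup.center K) K.subtype_injective).mp hbot
    exact ((Subgroup.center K).nontrivial_iff_ne_bot.mp hZnt) hc
  have hZtop : Subgroup.center K = ⊤ := by
    apply Subgroup.map_injective K.subtype_injective
    rw [hZmap, ← MonoidHom.range_eq_map, K.range_subtype]
  have comm : ∀ a b : G, a ∈ K → b ∈ K → a * b = b * a := by
    intro a b ha hb
    have : (⟨b, hb⟩ : K) ∈ Subgroup.center K := hZtop ▸ Subgroup.mem_top _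
    have := (Subgroup.mem_center_iff.mp this) ⟨a, ha⟩
    exact Subtype.ext_iff.mp this
  -- the p-part of |G| is s
  have hfact : (Nat.card G).factorization p = s := by
    rw [hcard, Nat.factorization_mul (pow_ne_zero _ hp.pos.ne')
      (pow_ne_zero _ hq.pos.ne'), hp.factorization_pow, hq.factorization_pow]
    simp [Finsupp.single_apply, (Ne.symm hpq)]
  have hPcard : ∀ P : Sylow p G, Nat.card (P : Subgroup G) = p ^ s := by
    intro P; rw [P.card_eq_multiplicity, hfact]
  -- K ⊔ P = ⊤ for every Sylow p-subgroup P
  have hsup : ∀ P : Sylow p G, K ⊔ (P : Subgroup G) = ⊤ := by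
    intro P
    apply Subgroup.eq_top_of_card_eq
    have h1 : Nat.card K ∣ Nat.card ↥(K ⊔ (P : Subgroup G)) :=
      Subgroup.card_dvd_of_le le_sup_left
    have h2 : Nat.card (P : Subgroup G) ∣ Nat.card ↥(K ⊔ (P : Subgroup G)) :=
      Subgroup.card_dvd_of_le le_sup_right
    rw [hKcard] at h1
    rw [hPcard P] at h2
    have hcop : Nat.Coprime (p ^ s) (q ^ t) :=
      Nat.Coprime.pow s t ((Nat.coprime_primes hp hq).mpr hpq)
    have h3 : p ^ s * q ^ t ∣ Nat.card ↥(K ⊔ (P : Subgroup G)) :=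
      hcop.mul_dvd_of_dvd_of_dvd h2 h1
    exact Nat.dvd_antisymm (Subgroup.card_subgroup_dvd_card _) (hcard ▸ h3)
  -- every g decomposes as k * x with k ∈ K, x ∈ P
  have hdec : ∀ (P : Sylow p G) (g : G), ∃ k ∈ K, ∃ x ∈ (P : Subgroup G), g = k * x := by
    intro P g
    have hg : g ∈ (↑(K ⊔ (P : Subgroup G)) : Set G) := by
      rw [hsup P]; trivial
    rw [Subgroup.normal_mul] at hg
    obtain ⟨k, hk, x, hx, hkx⟩ := hg
    exact ⟨k, hk, x, hx, hkx.symm⟩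
  -- no Sylow p-subgroup is normal
  have hnonormal : ∀ P : Sylow p G, ¬ (P : Subgroup G).Normal := by
    intro P hn
    obtain ⟨P₀, hP₀⟩ := hP
    obtain ⟨g, hg⟩ := MulAction.exists_smul_eq G P P₀
    haveI := hn
    rw [Sylow.smul_eq_of_normal] at hg
    exact hP₀ (hg ▸ hn)
  -- the stabilizer of P in K is trivial
  have hstab : ∀ P : Sylow p G, Subgroup.normalizer ((P : Subgroup G) : Set G) ⊓ K = ⊥ := by
    intro P
    by_contra hne
    have hHn : (Subgroup.normalizer ((P : Subgroup G) : Set G) ⊓ K).Normal := by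
      constructor
      intro h hh g
      obtain ⟨k, hk, x, hx, rfl⟩ := hdec P g
      obtain ⟨hh1, hh2⟩ := hh
      have hxn : x ∈ Subgroup.normalizer ((P : Subgroup G) : Set G) := Subgroup.le_normalizer hx
      have hx1 : x * h * x⁻¹ ∈ Subgroup.normalizer ((P : Subgroup G) : Set G) ⊓ K :=
        Subgroup.mem_inf.mpr ⟨mul_mem (mul_mem hxn hh1) (inv_mem hxn),
          hKnormal.conj_mem h hh2 x⟩
      have he : k * x * h * (k * x)⁻¹ = k * (x * h * x⁻¹) * k⁻¹ := by group
      rw [he, comm k (x * h * x⁻¹) hk hx1.2, mul_assoc, mul_inv_cancel, mul_one]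
      exact hx1
    have hKle : K ≤ Subgroup.normalizer ((P : Subgroup G) : Set G) :=
      inf_eq_right.mp (hKmin _ hHn inf_le_right hne)
    have : Subgroup.normalizer ((P : Subgroup G) : Set G) = ⊤ := by
      rw [← top_le_iff, ← hsup P]
      exact sup_le hKle Subgroup.le_normalizer
    exact hnonormal P (Subgroup.normalizer_eq_top_iff.mp this)
  -- conclusion
  intro P Q
  obtain ⟨g, hg⟩ := MulAction.exists_smul_eq G P Q
  obtain ⟨k, hk, x, hx, rfl⟩ := hdec P g
  have hxP : x • P = P := Sylow.smul_eq_iff_mem_normalizer.mpr (Subgroup.le_normalizer hx)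
  have hkQ : k • P = Q := by rw [← hg, mul_smul, hxP]
  refine ⟨⟨k, hk⟩, hkQ, ?_⟩
  intro k' hk'
  have h1 : ((k' : G)⁻¹ * k) • P = P := by
    rw [mul_smul, hkQ, inv_smul_eq_iff, hk']
  have hk'K : (k' : G)⁻¹ ∈ K := inv_mem k'.2
  have hmem : (k' : G)⁻¹ * k ∈ Subgroup.normalizer ((P : Subgroup G) : Set G) ⊓ K :=
    Subgroup.mem_inf.mpr ⟨Sylow.smul_eq_iff_mem_normalizer.mp h1, mul_mem hk'K hk⟩
  rw [hstab P] at hmem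
  exact Subtype.ext (inv_mul_eq_one.mp (Subgroup.mem_bot.mp hmem))
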